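/- arXiv:1806.04742 — 4 statements merged into one kernel-verified Lean document; each statement's English description precedes it below -/
import Mathlib

section
/- Let K* be a minimum s-t vertex cut of G′ with the prefix property, let k_v be the number of copies of v in K*, and set p_v = k_v · α. Then the power assignment (p_v) is feasible for MSPEC on G: removing all edges (u,v) with p_u + p_v ≥ w(u,v) (with p_s = p_t = 0) disconnects s from t, and the total assigned power equals α·|K*|. -/
open Finset

variable {α : Type*}

/-- The graph of surviving edges: an edge of `G` survives the power assignment `p`
iff `p u + p v < w (u,v)`; edges with `p u + p v ≥ w` are removed. -/
def cutGraph (G : SimpleGraph α) (w : Sym2 α → ℝ) (p : α → ℝ) : SimpleGraph α where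
  Adj u v := G.Adj u v ∧ p u + p v < w s(u, v)
  symm := by
    constructor
    intro u v h
    refine ⟨h.1.symm, ?_⟩
    rw [Sym2.eq_swap]
    linarith [h.2]
  loopless := ⟨fun u h => G.loopless.irrefl u h.1⟩

/-- MSPEC feasibility: `p s = p t = 0`, powers nonnegative, and removing the
edges `(u,v)` with `p u + p v ≥ w (u,v)` disconnects `s` from `t`. -/
def Feasible (G : SimpleGraph α) (w : Sym2 α → ℝ) (s t : α) (p : α → ℝ) : Prop :=
  p s = 0 ∧ p t = 0 ∧ (∀ v, 0 ≤ p v) ∧ ¬ (cutGraph G w p).Reachable s t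

/-- The uniform (bottleneck) power assignment: power `q` on every vertex of `V`,
and `0` on `s` and `t`. -/
def uniformP [DecidableEq α] (s t : α) (q : ℝ) : α → ℝ :=
  fun v => if v = s ∨ v = t then 0 else q

/-- Deleting a vertex set `K` from a graph (all edges incident to `K` disappear). -/
def delV (H : SimpleGraph α) (K : Set α) : SimpleGraph α where
  Adj u v := H.Adj u v ∧ u ∉ K ∧ v ∉ K
  symm := ⟨fun u v h => ⟨h.1.symm, h.2.2, h.2.1⟩⟩
  loopless := ⟨fun u h => H.loopless.irrefl u h.1⟩

/-- `K` is an `s`-`t` vertex cut of `H`. -/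
def IsCut (H : SimpleGraph α) (s t : α) (K : Set α) : Prop :=
  s ∉ K ∧ t ∉ K ∧ ¬ (delV H K).Reachable s t

/-- The power represented by a copy-vertex of the discretized graph:
copy `(v, i)` represents power `i * al` (and copies of `s`, `t` have power `0`). -/
def copyPow [DecidableEq α] (s t : α) (al : ℝ) (a : α × ℕ) : ℝ :=
  if a.1 = s ∨ a.1 = t then 0 else a.2 * al

/-- Validity of a copy-vertex: each `v ∈ V` has copies `v(0), …, v(c-1)`,
while `s` and `t` are represented by their `0`-th copy only. -/
def copyValid [DecidableEq α] (s t : α) (c : ℕ) (a : α × ℕ) : Prop :=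
  if a.1 = s ∨ a.1 = t then a.2 = 0 else a.2 < c

/-- The discretized graph `G'`: vertices are copies `v(i)`; there is an edge
`(u(i), v(j))` iff `(u,v)` is an edge of `G` and `iα + jα < w (u,v)`
(copies of `s`, `t` count with power `0`). -/
def discGraph [DecidableEq α] (G : SimpleGraph α) (w : Sym2 α → ℝ) (s t : α) (al : ℝ)
    (c : ℕ) : SimpleGraph (α × ℕ) where
  Adj a b := copyValid s t c a ∧ copyValid s t c b ∧ G.Adj a.1 b.1 ∧
      copyPow s t al a + copyPow s t al b < w s(a.1, b.1)
  symm := by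
    constructor
    intro a b h
    refine ⟨h.2.1, h.1, h.2.2.1.symm, ?_⟩
    rw [Sym2.eq_swap]
    linarith [h.2.2.2]
  loopless := ⟨fun a h => G.loopless.irrefl a.1 h.2.2.1⟩

/-- A set of vertices of the discretized graph consisting only of valid copies of
vertices of `V` (i.e. copy-vertices, excluding `s` and `t`). -/
def AllowedCut (s t : α) (c : ℕ) (K : Set (α × ℕ)) : Prop :=
  ∀ a ∈ K, a.1 ≠ s ∧ a.1 ≠ t ∧ a.2 < c

/-- given a prefix-structured `s`-`t` vertex cut `K*` of `G'` taking the
first `k v` copies of each `v ∈ V`, the powers `p v = k v · α` are feasible for MSPEC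
on `G`, and the total assigned power is `α · |K*|`. -/
theorem discretized_solution_feasible [Fintype α] [DecidableEq α]
    (G : SimpleGraph α) (w : Sym2 α → ℝ) (s t : α) (hst : s ≠ t)
    (al : ℝ) (hal : 0 < al) (c : ℕ)
    (hw : ∀ u v, G.Adj u v → w s(u, v) ≤ c * al)
    (k : α → ℕ) (hk : ∀ v, k v ≤ c)
    (hcut : IsCut (discGraph G w s t al c) (s, 0) (t, 0)
      {a : α × ℕ | a.1 ≠ s ∧ a.1 ≠ t ∧ a.2 < k a.1}) :
    Feasible G w s t (fun v => if v = s ∨ v = t then 0 else (k v : ℝ) * al) ∧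
      (∑ v, (if v = s ∨ v = t then (0 : ℝ) else (k v : ℝ) * al)) =
        al * ({a : α × ℕ | a.1 ≠ s ∧ a.1 ≠ t ∧ a.2 < k a.1}.ncard : ℝ) := by
  set p : α → ℝ := fun v => if v = s ∨ v = t then 0 else (k v : ℝ) * al with hp
  set K : Set (α × ℕ) := {a : α × ℕ | a.1 ≠ s ∧ a.1 ≠ t ∧ a.2 < k a.1} with hK
  obtain ⟨hsK, htK, hnr⟩ := hcut
  have hpnn : ∀ v, 0 ≤ p v := by
    intro v
    by_cases h : v = s ∨ v = t
    · simp [hp, h]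
    · simp only [hp, h, if_false]
      positivity
  set f : α → α × ℕ := fun v => if v = s ∨ v = t then (v, 0) else (v, k v) with hf
  constructor
  · refine ⟨by simp [hp], by simp [hp], hpnn, ?_⟩
    intro hreach
    obtain ⟨walk⟩ := hreach
    have step : ∀ {u v : α}, (cutGraph G w p).Adj u v →
        (delV (discGraph G w s t al c) K).Adj (f u) (f v) := by
      intro u v hadj
      obtain ⟨hGadj, hlt⟩ := hadj
      have hwb : w s(u, v) ≤ c * al := hw u v hGadj
      have hcopy : ∀ x : α, copyPow s t al (f x) = p x := by
        intro x
        by_cases h : x = s ∨ x = t <;> simp [hf, copyPow, hp, h]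
      have hklt : ∀ x : α, p x < w s(u, v) → ¬(x = s ∨ x = t) → k x < c := by
        intro x hx hns
        have : (k x : ℝ) * al < (c : ℝ) * al := by
          have : p x = (k x : ℝ) * al := by simp [hp, hns]
          linarith
        have := lt_of_mul_lt_mul_right this hal.le
        exact_mod_cast this
      have hpu : p u < w s(u, v) := by have := hpnn v; linarith
      have hpv : p v < w s(u, v) := by have := hpnn u; linarith
      have hval : ∀ x : α, p x < w s(u, v) → copyValid s t c (f x) := by
        intro x hx
        by_cases h : x = s ∨ x = t
        · simp [hf, copyValid, h]
        · simp [hf, copyValid, h, hklt x hx h]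
      have hnotK : ∀ x : α, f x ∉ K := by
        intro x
        by_cases h : x = s ∨ x = t
        · rcases h with h | h <;> simp [hf, hK, h]
        · push_neg at h
          simp [hf, hK, h.1, h.2, h]
      refine ⟨⟨hval u hpu, hval v hpv, ?_, ?_⟩, hnotK u, hnotK v⟩
      · have : (f u).1 = u := by by_cases h : u = s ∨ u = t <;> simp [hf, h]
        have hv1 : (f v).1 = v := by by_cases h : v = s ∨ v = t <;> simp [hf, h]
        rw [this, hv1]; exact hGadj
      · have hu1 : (f u).1 = u := by by_cases h : u = s ∨ u = t <;> simp [hf, h]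
        have hv1 : (f v).1 = v := by by_cases h : v = s ∨ v = t <;> simp [hf, h]
        rw [hu1, hv1, hcopy u, hcopy v]; exact hlt
    have key : ∀ {a b : α}, (cutGraph G w p).Walk a b →
        (delV (discGraph G w s t al c) K).Reachable (f a) (f b) := by
      intro a b wk
      induction wk with
      | nil => exact SimpleGraph.Reachable.refl _
      | cons h _ ih => exact (step h).reachable.trans ih
    have := key walk
    have hfs : f s = (s, 0) := by simp [hf]
    have hft : f t = (t, 0) := by simp [hf]
    rw [hfs, hft] at this
    exact hnr this
  · have hKfin : K = ↑(Finset.univ.biUnion (fun v : α =>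
        if v = s ∨ v = t then (∅ : Finset (α × ℕ))
        else (Finset.range (k v)).image (fun i => (v, i)))) := by
      ext ⟨v, i⟩
      simp only [hK, Set.mem_setOf_eq, Finset.coe_biUnion, Finset.mem_coe,
        Finset.mem_biUnion, Finset.mem_univ, true_and, Set.mem_iUnion]
      constructor
      · rintro ⟨h1, h2, h3⟩
        refine ⟨v, ?_⟩
        simp [h1, h2, h3, Finset.mem_image]
      · rintro ⟨u, hu⟩
        by_cases h : u = s ∨ u = t
        · simp [h] at hu
        · simp only [h, if_false, Finset.mem_image, Finset.mem_range] at hu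
          simp only [Prod.mk.injEq] at hu
          obtain ⟨-, j, hjlt, rfl, rfl⟩ := hu
          push_neg at h
          exact ⟨h.1, h.2, hjlt⟩
    rw [hKfin, Set.ncard_coe_finset]
    rw [Finset.card_biUnion]
    · have : ∀ v : α, (if v = s ∨ v = t then (∅ : Finset (α × ℕ))
          else (Finset.range (k v)).image (fun i => (v, i))).card =
          if v = s ∨ v = t then 0 else k v := by
        intro v
        by_cases h : v = s ∨ v = t
        · simp [h]
        · simp only [h, if_false]
          rw [Finset.card_image_of_injective _ (fun a b hab => (Prod.mk.injEq .. ▸ hab).2),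
            Finset.card_range]
      simp only [this]
      push_cast
      rw [Finset.mul_sum]
      apply Finset.sum_congr rfl
      intro v _
      by_cases h : v = s ∨ v = t
      · simp [hp, h]
      · simp only [hp, h, if_false]
        ring
    · intro x _ y _ hxy
      simp only [Finset.disjoint_left]
      intro a ha hb
      by_cases hx : x = s ∨ x = t
      · simp [hx] at ha
      · by_cases hy : y = s ∨ y = t
        · simp [hy] at hb
        · simp only [hx, hy, if_false, Finset.mem_image, Finset.mem_range] at ha hb
          obtain ⟨i, _, rfl⟩ := ha
          obtain ⟨j, _, hj⟩ := hb
          exact hxy ((Prod.mk.injEq .. ▸ hj).1.symm)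
end

section
/- If all edge weights of G equal 1, then MSPEC has an optimal solution in which every power value is 0 or 1, and the optimal value equals the size of a minimum s-t vertex cut in G (restricted to V). -/
open Finset

variable {α : Type*}

namespace MSPECAux

open SimpleGraph MeasureTheory
open scoped Classical ENNReal

variable {α : Type*}

/-- The set of possible "walk values" from `s` to `v`. -/
def dS (G : SimpleGraph α) (s : α) (p : α → ℝ) (v : α) : Set ℝ :=
  {x | ∃ W : G.Walk s v, x = ∑ u ∈ W.support.toFinset, p u}

/-- Fractional distance from `s`. -/
noncomputable def dval (G : SimpleGraph α) (s : α) (p : α → ℝ) (v : α) : ℝ :=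
  sInf (dS G s p v)

lemma dS_finite [Fintype α] (G : SimpleGraph α) (s : α) (p : α → ℝ) (v : α) :
    (dS G s p v).Finite := by
  apply Set.Finite.subset
    (Finset.finite_toSet ((Finset.univ.powerset).image fun F => ∑ u ∈ F, p u))
  rintro x ⟨W, rfl⟩
  simp only [Finset.coe_image, Set.mem_image, Finset.mem_coe, Finset.mem_powerset]
  exact ⟨W.support.toFinset, Finset.subset_univ _, rfl⟩

lemma dval_nonneg [Fintype α] {G : SimpleGraph α} {s : α} {p : α → ℝ}
    (hp : ∀ v, 0 ≤ p v) (v : α) (hr : G.Reachable s v) : 0 ≤ dval G s p v := by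
  obtain ⟨W⟩ := hr
  refine le_csInf ⟨_, W, rfl⟩ ?_
  rintro x ⟨W', rfl⟩
  exact Finset.sum_nonneg fun i _ => hp i

lemma dval_s [Fintype α] {G : SimpleGraph α} {s : α} {p : α → ℝ}
    (hp : ∀ v, 0 ≤ p v) (hps : p s = 0) : dval G s p s = 0 := by
  have h1 : dval G s p s ≤ 0 := by
    apply csInf_le (dS_finite G s p s).bddBelow
    exact ⟨Walk.nil, by simp [hps]⟩
  exact le_antisymm h1 (dval_nonneg hp s (Reachable.refl s))

lemma dval_relax [Fintype α] {G : SimpleGraph α} {s : α} {p : α → ℝ}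
    (hp : ∀ v, 0 ≤ p v) {a b : α} (hr : G.Reachable s a) (hab : G.Adj a b) :
    dval G s p b ≤ dval G s p a + p b := by
  have hne : (dS G s p a).Nonempty := by obtain ⟨W⟩ := hr; exact ⟨_, W, rfl⟩
  obtain ⟨W, hW⟩ := hne.csInf_mem (dS_finite G s p a)
  have hval : dval G s p b ≤ ∑ u ∈ (W.concat hab).support.toFinset, p u :=
    csInf_le (dS_finite G s p b).bddBelow ⟨W.concat hab, rfl⟩
  have hsupp : (W.concat hab).support.toFinset = W.support.toFinset ∪ {b} := by
    rw [Walk.support_concat]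
    simp [List.toFinset_append]
  rw [hsupp] at hval
  by_cases hb : b ∈ W.support.toFinset
  · have : W.support.toFinset ∪ {b} = W.support.toFinset := by
      apply Finset.union_eq_left.mpr; simpa using hb
    rw [this] at hval
    rw [show dval G s p a = _ from hW]
    linarith [hp b]
  · rw [Finset.sum_union (by simpa using hb)] at hval
    rw [show dval G s p a = _ from hW]
    simpa using hval

lemma dval_t [Fintype α] {G : SimpleGraph α} {s t : α} {p : α → ℝ}
    (hp : ∀ v, 0 ≤ p v)
    (hdis : ¬ (cutGraph G (fun _ => 1) p).Reachable s t)
    (hr : G.Reachable s t) : 1 ≤ dval G s p t := by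
  obtain ⟨W0⟩ := hr
  refine le_csInf ⟨_, W0, rfl⟩ ?_
  rintro x ⟨W, rfl⟩
  by_contra hlt
  push_neg at hlt
  refine hdis ⟨W.transfer _ fun e he => ?_⟩
  induction e using Sym2.ind with
  | _ u v =>
    have hadj : G.Adj u v := (SimpleGraph.mem_edgeSet G).mp (W.edges_subset_edgeSet he)
    have hu : u ∈ W.support := W.fst_mem_support_of_mem_edges he
    have hv : v ∈ W.support := W.snd_mem_support_of_mem_edges he
    rw [SimpleGraph.mem_edgeSet]
    refine (⟨hadj, ?_⟩ : G.Adj u v ∧ p u + p v < 1)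
    have hsub : ({u, v} : Finset α) ⊆ W.support.toFinset := by
      intro x hx
      simp only [Finset.mem_insert, Finset.mem_singleton] at hx
      rcases hx with rfl | rfl <;> simpa [List.mem_toFinset]
    have hle : p u + p v ≤ ∑ x ∈ W.support.toFinset, p x := by
      rw [← Finset.sum_pair hadj.ne]
      exact Finset.sum_le_sum_of_subset_of_nonneg hsub fun i _ _ => hp i
    show p u + p v < 1
    linarith

lemma theta_cut [Fintype α] (G : SimpleGraph α) (s t : α) (p : α → ℝ)
    (hf : Feasible G (fun _ => 1) s t p) (θ : ℝ) (h0 : 0 ≤ θ) (h1 : θ < 1) :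
    IsCut G s t {v | dval G s p v - p v ≤ θ ∧ θ < dval G s p v} := by
  obtain ⟨hps, hpt, hp, hdis⟩ := hf
  have hds : dval G s p s = 0 := dval_s hp hps
  refine ⟨?_, ?_, ?_⟩
  · rintro ⟨-, hlt⟩
    rw [hds] at hlt; linarith
  · rintro ⟨hle, hlt⟩
    rw [hpt] at hle; linarith
  · rintro ⟨W⟩
    have key : ∀ (n : ℕ) (a : α)
        (W : (delV G {v | dval G s p v - p v ≤ θ ∧ θ < dval G s p v}).Walk a t),
        W.length ≤ n → G.Reachable s a → dval G s p a ≤ θ → False := by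
      intro n
      induction n with
      | zero =>
        intro a W hlen hr hle
        cases W with
        | nil => exact absurd hle (not_le.mpr (lt_of_lt_of_le h1 (dval_t hp hdis hr)))
        | cons h q => simp [Walk.length_cons] at hlen
      | succ n ih =>
        intro a W hlen hr hle
        cases W with
        | nil => exact absurd hle (not_le.mpr (lt_of_lt_of_le h1 (dval_t hp hdis hr)))
        | @cons a b t' h q =>
          replace h : G.Adj a b ∧ _ ∧ _ := h
          have hG : G.Adj a b := h.1
          have hrb : G.Reachable s b := hr.trans hG.reachable
          have hrel := dval_relax hp hr hG
          rcases le_or_gt (dval G s p b) θ with h' | h'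
          · exact ih b q (by simpa [Walk.length_cons] using hlen) hrb h'
          · exact h.2.2 ⟨by linarith, h'⟩
    exact key W.length s W le_rfl (Reachable.refl s) (by rw [hds]; exact h0)

lemma exists_theta [Fintype α] (p d : α → ℝ) (hp : ∀ v, 0 ≤ p v) :
    ∃ θ : ℝ, 0 ≤ θ ∧ θ < 1 ∧
      (((Finset.univ.filter fun v => d v - p v ≤ θ ∧ θ < d v).card : ℝ) ≤ ∑ v, p v) := by
  by_contra hcon
  push_neg at hcon
  have hsum0 : 0 ≤ ∑ v, p v := Finset.sum_nonneg fun i _ => hp i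
  set C : ℕ := ⌊∑ v, p v⌋₊ + 1 with hC
  have hCgt : (∑ v, p v) < C := by
    rw [hC]
    push_cast
    exact Nat.lt_floor_add_one (∑ v, p v)
  have hcard : ∀ θ : ℝ, 0 ≤ θ → θ < 1 →
      C ≤ (Finset.univ.filter fun v => d v - p v ≤ θ ∧ θ < d v).card := by
    intro θ hθ0 hθ1
    have h := hcon θ hθ0 hθ1
    have := (Nat.floor_lt hsum0).mpr h
    omega
  set f : ℝ → ℝ≥0∞ := fun θ => ∑ v : α, (Set.Ico (d v - p v) (d v)).indicator 1 θ with hf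
  have hmeas : ∀ v : α,
      Measurable fun θ => (Set.Ico (d v - p v) (d v)).indicator (1 : ℝ → ℝ≥0∞) θ :=
    fun v => measurable_one.indicator measurableSet_Ico
  have hub : ∫⁻ θ in Set.Ico (0:ℝ) 1, f θ ≤ ENNReal.ofReal (∑ v, p v) := by
    rw [hf, MeasureTheory.lintegral_finset_sum _ (fun v _ => hmeas v),
      ENNReal.ofReal_sum_of_nonneg (fun i _ => hp i)]
    refine Finset.sum_le_sum fun v _ => ?_
    rw [MeasureTheory.lintegral_indicator_one measurableSet_Ico,
      MeasureTheory.Measure.restrict_apply measurableSet_Ico]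
    calc volume (Set.Ico (d v - p v) (d v) ∩ Set.Ico 0 1)
        ≤ volume (Set.Ico (d v - p v) (d v)) := measure_mono Set.inter_subset_left
      _ = ENNReal.ofReal (p v) := by rw [Real.volume_Ico, sub_sub_cancel]
  have hlb : (C : ℝ≥0∞) ≤ ∫⁻ θ in Set.Ico (0:ℝ) 1, f θ := by
    have h1 : ∫⁻ _ in Set.Ico (0:ℝ) 1, (C:ℝ≥0∞) = (C:ℝ≥0∞) := by
      rw [MeasureTheory.setLIntegral_const, Real.volume_Ico]
      norm_num
    rw [← h1]
    refine MeasureTheory.setLIntegral_mono (Finset.measurable_sum _ fun v _ => hmeas v) ?_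
    intro θ hθ
    have hfθ : f θ = ((Finset.univ.filter fun v => d v - p v ≤ θ ∧ θ < d v).card : ℝ≥0∞) := by
      rw [hf]
      simp only [Set.indicator_apply, Set.mem_Ico, Pi.one_apply]
      exact Finset.sum_boole _ _
    rw [hfθ]
    exact_mod_cast hcard θ hθ.1 hθ.2
  have hfin : (C : ℝ) ≤ ∑ v, p v := by
    have h2 := hlb.trans hub
    rw [show ((C:ℕ):ℝ≥0∞) = ENNReal.ofReal (C:ℝ) from (ENNReal.ofReal_natCast C).symm] at h2
    exact (ENNReal.ofReal_le_ofReal_iff hsum0).mp h2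
  linarith

lemma rounding [Fintype α] (G : SimpleGraph α) (s t : α) (p : α → ℝ)
    (hf : Feasible G (fun _ => 1) s t p) :
    ∃ K : Set α, IsCut G s t K ∧ (K.ncard : ℝ) ≤ ∑ v, p v := by
  obtain ⟨θ, h0, h1, hcard⟩ := exists_theta p (dval G s p) hf.2.2.1
  refine ⟨{v | dval G s p v - p v ≤ θ ∧ θ < dval G s p v},
    theta_cut G s t p hf θ h0 h1, ?_⟩
  have hKeq : {v | dval G s p v - p v ≤ θ ∧ θ < dval G s p v} =
      ↑(Finset.univ.filter fun v => dval G s p v - p v ≤ θ ∧ θ < dval G s p v) := by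
    ext x; simp
  rw [hKeq, Set.ncard_coe_finset]
  exact hcard

lemma indicator_feasible [Fintype α] (G : SimpleGraph α) (s t : α) (K : Set α)
    (hK : IsCut G s t K) :
    Feasible G (fun _ => 1) s t (fun v => if v ∈ K then (1:ℝ) else 0) ∧
    ∑ v, (if v ∈ K then (1:ℝ) else 0) = (K.ncard : ℝ) := by
  obtain ⟨hs, ht, hdis⟩ := hK
  have hgraph : cutGraph G (fun _ => 1) (fun v => if v ∈ K then (1:ℝ) else 0) = delV G K := by
    ext u v
    show G.Adj u v ∧ _ + _ < (1:ℝ) ↔ G.Adj u v ∧ u ∉ K ∧ v ∉ K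
    constructor
    · rintro ⟨h, hlt⟩
      refine ⟨h, ?_, ?_⟩ <;> intro hm <;> simp only [hm, if_true] at hlt <;>
        split_ifs at hlt <;> linarith
    · rintro ⟨h, hu, hv⟩
      exact ⟨h, by simp [hu, hv]⟩
  refine ⟨⟨by simp [hs], by simp [ht], fun v => by by_cases h : v ∈ K <;> simp [h],
    by rw [hgraph]; exact hdis⟩, ?_⟩
  rw [Finset.sum_boole, Set.ncard_eq_toFinset_card' K]
  congr 1
  have : (Finset.univ.filter fun v => v ∈ K) = K.toFinset := by
    ext x; simp
  rw [this]

lemma cut_exists (G : SimpleGraph α) (s t : α) (hst : s ≠ t) (hadj : ¬ G.Adj s t) :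
    IsCut G s t {v | v ≠ s ∧ v ≠ t} := by
  refine ⟨by simp, by simp, ?_⟩
  rintro ⟨W⟩
  cases W with
  | nil => exact hst rfl
  | @cons s b t h q =>
    replace h : G.Adj s b ∧ _ ∧ _ := h
    have hb : b = s ∨ b = t := by
      have := h.2.2
      simp only [Set.mem_setOf_eq, not_and_or, not_not] at this
      tauto
    rcases hb with rfl | rfl
    · exact G.loopless.irrefl _ h.1
    · exact hadj h.1

end MSPECAux

/-- if all edge weights are `1`, MSPEC has an optimal solution with all
powers in `{0,1}`, and its optimal value equals the size of a minimum `s`-`t` vertex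
cut of `G` (restricted to `V`). -/
theorem uniform_weights_vertex_cut [Fintype α]
    (G : SimpleGraph α) (s t : α) (hst : s ≠ t) (hadj : ¬ G.Adj s t)
    (OPT : ℝ)
    (hOPT : IsLeast {c : ℝ | ∃ p, Feasible G (fun _ => 1) s t p ∧ ∑ v, p v = c} OPT) :
    (∃ p, Feasible G (fun _ => 1) s t p ∧ ∑ v, p v = OPT ∧
      ∀ v, p v = 0 ∨ p v = 1) ∧
    ∃ K : Set α, IsCut G s t K ∧ (∀ K', IsCut G s t K' → K.ncard ≤ K'.ncard) ∧
      OPT = (K.ncard : ℝ) := by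
  classical
  obtain ⟨⟨p0, hp0, hp0sum⟩, hlb⟩ := hOPT
  have hNE : Set.Nonempty {n : ℕ | ∃ K : Set α, IsCut G s t K ∧ K.ncard = n} :=
    ⟨_, _, MSPECAux.cut_exists G s t hst hadj, rfl⟩
  obtain ⟨Kmin, hKmin, hKc⟩ := Nat.sInf_mem hNE
  have hmin : ∀ K', IsCut G s t K' → Kmin.ncard ≤ K'.ncard := by
    intro K' hK'
    rw [hKc]
    exact Nat.sInf_le ⟨K', hK', rfl⟩
  obtain ⟨hfeasK, hsumK⟩ := MSPECAux.indicator_feasible G s t Kmin hKmin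
  have hOPTle : OPT ≤ (Kmin.ncard : ℝ) := hlb ⟨_, hfeasK, hsumK⟩
  obtain ⟨K1, hK1, hK1le⟩ := MSPECAux.rounding G s t p0 hp0
  have hge : (Kmin.ncard : ℝ) ≤ OPT := by
    have h1 : (Kmin.ncard : ℝ) ≤ (K1.ncard : ℝ) := by exact_mod_cast hmin K1 hK1
    rw [hp0sum] at hK1le
    linarith
  have hOPTeq : OPT = (Kmin.ncard : ℝ) := le_antisymm hOPTle hge
  refine ⟨⟨_, hfeasK, by rw [hsumK, hOPTeq], fun v => ?_⟩, Kmin, hKmin, hmin, hOPTeq⟩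
  by_cases h : v ∈ Kmin <;> simp [h]
end

section
/- If all edge weights of G are non-negative integers, then MSPEC has an optimal solution in which every power value is a non-negative integer. -/
open Finset

variable {α : Type*}

open scoped Classical

/-- One Egerváry-type shifting step: if the "decrease side" `A` (fractional
vertices in `S`) is at least as large as the "increase side" `B`, we can shift
powers to strictly reduce the number of fractional vertices, without increasing
the total cost, keeping nonnegativity, the cover constraints on `S`–`Sᶜ` edges,
and the values at vertices that were already integral. -/
lemma shift_step [Fintype α] (G : SimpleGraph α) (w : Sym2 α → ℝ)
    (hw : ∀ e, ∃ z : ℕ, w e = z) (S : Set α) (p : α → ℝ)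
    (hpos : ∀ v, 0 ≤ p v)
    (hcon : ∀ u v, u ∈ S → v ∉ S → G.Adj u v → w s(u,v) ≤ p u + p v)
    (hcard : (univ.filter fun v => Int.fract (p v) ≠ 0 ∧ v ∉ S).card ≤
             (univ.filter fun v => Int.fract (p v) ≠ 0 ∧ v ∈ S).card)
    (hA : (univ.filter fun v : α => Int.fract (p v) ≠ 0 ∧ v ∈ S).Nonempty) :
    ∃ p' : α → ℝ, (∀ v, 0 ≤ p' v) ∧
      (∀ u v, u ∈ S → v ∉ S → G.Adj u v → w s(u,v) ≤ p' u + p' v) ∧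
      (∑ v, p' v ≤ ∑ v, p v) ∧
      (∀ v, Int.fract (p v) = 0 → p' v = p v) ∧
      (univ.filter fun v => Int.fract (p' v) ≠ 0).card <
        (univ.filter fun v => Int.fract (p v) ≠ 0).card := by
  set A := univ.filter fun v : α => Int.fract (p v) ≠ 0 ∧ v ∈ S with hAdef
  set B := univ.filter fun v : α => Int.fract (p v) ≠ 0 ∧ v ∉ S with hBdef
  have hmemA : ∀ v, v ∈ A ↔ Int.fract (p v) ≠ 0 ∧ v ∈ S := by
    intro v; simp [hAdef]
  have hmemB : ∀ v, v ∈ B ↔ Int.fract (p v) ≠ 0 ∧ v ∉ S := by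
    intro v; simp [hBdef]
  set E := A.image (fun u => Int.fract (p u)) ∪ B.image (fun v => 1 - Int.fract (p v))
    with hEdef
  have hEne : E.Nonempty := by
    obtain ⟨a, ha⟩ := hA
    exact ⟨Int.fract (p a), by
      simp only [hEdef, mem_union]
      exact Or.inl (mem_image_of_mem _ ha)⟩
  set ε := E.min' hEne with hεdef
  have hεpos : 0 < ε := by
    rw [hεdef, Finset.lt_min'_iff]
    intro y hy
    simp only [hEdef, mem_union, mem_image] at hy
    rcases hy with ⟨u, hu, rfl⟩ | ⟨v, hv, rfl⟩
    · exact lt_of_le_of_ne (Int.fract_nonneg _) (Ne.symm ((hmemA u).1 hu).1)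
    · have := Int.fract_lt_one (p v); linarith
  have hεA : ∀ u ∈ A, ε ≤ Int.fract (p u) := fun u hu =>
    Finset.min'_le _ _ (mem_union_left _ (mem_image_of_mem _ hu))
  have hεB : ∀ v ∈ B, ε ≤ 1 - Int.fract (p v) := fun v hv =>
    Finset.min'_le _ _ (mem_union_right _ (mem_image_of_mem _ hv))
  have hdisj : Disjoint A B := by
    rw [Finset.disjoint_left]
    intro a haA haB
    exact ((hmemB a).1 haB).2 ((hmemA a).1 haA).2
  set p' := fun v => if v ∈ A then p v - ε else if v ∈ B then p v + ε else p v with hp'def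
  have hint : ∀ v, Int.fract (p v) = 0 → p v = (⌊p v⌋ : ℝ) := by
    intro v hv
    have := Int.floor_add_fract (p v)
    rw [hv] at this; linarith
  have hpres : ∀ v, Int.fract (p v) = 0 → p' v = p v := by
    intro v hv
    have hvA : v ∉ A := fun h => ((hmemA v).1 h).1 hv
    have hvB : v ∉ B := fun h => ((hmemB v).1 h).1 hv
    simp [hp'def, hvA, hvB]
  refine ⟨p', ?_, ?_, ?_, hpres, ?_⟩
  · -- nonnegativity
    intro v
    by_cases hvA : v ∈ A
    · have h1 := hεA v hvA
      have h2 : (0:ℝ) ≤ (⌊p v⌋ : ℝ) := by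
        exact_mod_cast Int.floor_nonneg.mpr (hpos v)
      have h3 : p v - Int.fract (p v) = (⌊p v⌋ : ℝ) := Int.self_sub_fract _
      simp only [hp'def, if_pos hvA]
      linarith
    · by_cases hvB : v ∈ B
      · simp only [hp'def, if_neg hvA, if_pos hvB]
        linarith [hpos v, hεpos.le]
      · simp only [hp'def, if_neg hvA, if_neg hvB]; exact hpos v
  · -- cover constraints
    intro u v hu hv hadj
    have huB : u ∉ B := fun h => ((hmemB u).1 h).2 hu
    have hvA : v ∉ A := fun h => hv ((hmemA v).1 h).2
    by_cases hufr : Int.fract (p u) = 0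
    · -- u integral: p' u = p u, p' v ≥ p v
      have huA : u ∉ A := fun h => ((hmemA u).1 h).1 hufr
      have h1 : p' u = p u := by simp [hp'def, huA, huB]
      have h2 : p v ≤ p' v := by
        by_cases hvB : v ∈ B
        · simp only [hp'def, if_neg hvA, if_pos hvB]; linarith [hεpos.le]
        · simp [hp'def, hvA, hvB]
      have := hcon u v hu hv hadj
      linarith
    · have huA : u ∈ A := (hmemA u).2 ⟨hufr, hu⟩
      have h1 : p' u = p u - ε := by simp [hp'def, huA]
      by_cases hvfr : Int.fract (p v) = 0
      · -- v integral: use integrality of w to gain slack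
        have hvB : v ∉ B := fun h => ((hmemB v).1 h).1 hvfr
        have h2 : p' v = p v := by simp [hp'def, hvA, hvB]
        obtain ⟨z, hz⟩ := hw s(u,v)
        have hpv : p v = (⌊p v⌋ : ℝ) := hint v hvfr
        have hle : ((z : ℤ) - ⌊p v⌋ : ℤ) ≤ ⌊p u⌋ := by
          rw [Int.le_floor]
          push_cast
          have := hcon u v hu hv hadj
          rw [hz] at this
          linarith
        have hle' : ((z : ℤ) - ⌊p v⌋ : ℝ) ≤ (⌊p u⌋ : ℝ) := by exact_mod_cast hle
        have hfl : (⌊p u⌋ : ℝ) = p u - Int.fract (p u) := (Int.self_sub_fract _).symm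
        have hεu := hεA u huA
        rw [hz, h1, h2]
        push_cast at hle'
        linarith
      · -- both fractional: shifts cancel
        have hvB : v ∈ B := (hmemB v).2 ⟨hvfr, hv⟩
        have h2 : p' v = p v + ε := by simp [hp'def, hvA, hvB]
        have := hcon u v hu hv hadj
        rw [h1, h2]; linarith
  · -- sum does not increase
    have hpt : ∀ v, p' v - p v =
        (if v ∈ A then -ε else 0) + (if v ∈ B then ε else 0) := by
      intro v
      by_cases hvA : v ∈ A
      · have hvB : v ∉ B := Finset.disjoint_left.1 hdisj hvA
        simp [hp'def, hvA, hvB]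
        try ring
      · by_cases hvB : v ∈ B
        · simp [hp'def, hvA, hvB]
        · simp [hp'def, hvA, hvB]
    have hsum : ∑ v, (p' v - p v) = A.card • (-ε) + B.card • ε := by
      calc ∑ v, (p' v - p v)
          = ∑ v, ((if v ∈ A then -ε else 0) + (if v ∈ B then ε else 0)) := by
            exact Finset.sum_congr rfl fun v _ => hpt v
        _ = (∑ v, if v ∈ A then -ε else 0) + (∑ v, if v ∈ B then ε else 0) := by
            rw [Finset.sum_add_distrib]
        _ = (∑ v ∈ univ ∩ A, -ε) + (∑ v ∈ univ ∩ B, ε) := by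
            rw [Finset.sum_ite_mem, Finset.sum_ite_mem]
        _ = A.card • (-ε) + B.card • ε := by
            rw [Finset.univ_inter, Finset.univ_inter, Finset.sum_const, Finset.sum_const]
    have hsum' : ∑ v, p' v - ∑ v, p v = (A.card : ℝ) * (-ε) + (B.card : ℝ) * ε := by
      rw [← Finset.sum_sub_distrib, hsum, nsmul_eq_mul, nsmul_eq_mul]
    have hcard' : (B.card : ℝ) ≤ (A.card : ℝ) := by exact_mod_cast hcard
    nlinarith [hεpos.le]
  · -- strictly fewer fractional vertices
    have hFsub : (univ.filter fun v => Int.fract (p' v) ≠ 0) ⊆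
        (univ.filter fun v => Int.fract (p v) ≠ 0) := by
      intro v hv
      rw [mem_filter] at hv ⊢
      refine ⟨mem_univ v, fun h0 => ?_⟩
      exact hv.2 (by rw [hpres v h0]; exact h0)
    have hwit : ∃ x, Int.fract (p x) ≠ 0 ∧ Int.fract (p' x) = 0 := by
      have hmem : ε ∈ E := Finset.min'_mem E hEne
      rw [hEdef] at hmem
      rcases Finset.mem_union.1 hmem with h | h
      · obtain ⟨u₀, hu₀, he⟩ := Finset.mem_image.1 h
        refine ⟨u₀, ((hmemA u₀).1 hu₀).1, ?_⟩
        have h1 : p' u₀ = p u₀ - ε := by simp [hp'def, hu₀]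
        have h2 : p u₀ - Int.fract (p u₀) = (⌊p u₀⌋ : ℝ) := Int.self_sub_fract _
        have h3 : p u₀ - ε = ((⌊p u₀⌋ : ℤ) : ℝ) := by rw [← he]; exact_mod_cast h2
        rw [h1, h3]
        exact Int.fract_intCast _
      · obtain ⟨v₀, hv₀, he⟩ := Finset.mem_image.1 h
        have hv₀A : v₀ ∉ A := Finset.disjoint_right.1 hdisj hv₀
        refine ⟨v₀, ((hmemB v₀).1 hv₀).1, ?_⟩
        have h1 : p' v₀ = p v₀ + ε := by simp [hp'def, hv₀A, hv₀]
        have h2 : (⌊p v₀⌋ : ℝ) + Int.fract (p v₀) = p v₀ := Int.floor_add_fract _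
        have h3 : p v₀ + ε = ((⌊p v₀⌋ + 1 : ℤ) : ℝ) := by rw [← he]; push_cast; linarith
        rw [h1, h3]
        exact Int.fract_intCast _
    obtain ⟨x, hx1, hx2⟩ := hwit
    refine Finset.card_lt_card ((Finset.ssubset_iff_of_subset hFsub).2 ⟨x, ?_, ?_⟩)
    · exact mem_filter.2 ⟨mem_univ x, hx1⟩
    · simp [hx2]

/-- Iterating the shifting step: any nonnegative fractional cover of the
`S`–`Sᶜ` edges can be rounded to an integral one of no greater cost, without
changing the already-integral values. -/
lemma round_all [Fintype α] (G : SimpleGraph α) (w : Sym2 α → ℝ)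
    (hw : ∀ e, ∃ z : ℕ, w e = z) (S : Set α) :
    ∀ k (p : α → ℝ), (univ.filter fun v => Int.fract (p v) ≠ 0).card ≤ k →
      (∀ v, 0 ≤ p v) →
      (∀ u v, u ∈ S → v ∉ S → G.Adj u v → w s(u,v) ≤ p u + p v) →
      ∃ q : α → ℝ, (∀ v, 0 ≤ q v) ∧ (∀ v, Int.fract (q v) = 0) ∧
        (∀ u v, u ∈ S → v ∉ S → G.Adj u v → w s(u,v) ≤ q u + q v) ∧
        (∑ v, q v ≤ ∑ v, p v) ∧ (∀ v, Int.fract (p v) = 0 → q v = p v) := by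
  intro k
  induction k with
  | zero =>
    intro p hcard hpos hcon
    refine ⟨p, hpos, ?_, hcon, le_rfl, fun _ _ => rfl⟩
    intro v
    by_contra h
    have hm : v ∈ univ.filter (fun v => Int.fract (p v) ≠ 0) :=
      mem_filter.2 ⟨mem_univ v, h⟩
    have := Finset.card_pos.2 ⟨v, hm⟩
    omega
  | succ k ih =>
    intro p hcard hpos hcon
    by_cases hle : (univ.filter fun v => Int.fract (p v) ≠ 0).card ≤ k
    · exact ih p hle hpos hcon
    · have hFpos : 0 < (univ.filter fun v => Int.fract (p v) ≠ 0).card := by omega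
      set A := univ.filter fun v : α => Int.fract (p v) ≠ 0 ∧ v ∈ S with hAdef
      set B := univ.filter fun v : α => Int.fract (p v) ≠ 0 ∧ v ∉ S with hBdef
      have hFsub : (univ.filter fun v => Int.fract (p v) ≠ 0) ⊆ A ∪ B := by
        intro v hv
        rw [mem_filter] at hv
        by_cases hvS : v ∈ S
        · exact Finset.mem_union_left _ (mem_filter.2 ⟨mem_univ v, hv.2, hvS⟩)
        · exact Finset.mem_union_right _ (mem_filter.2 ⟨mem_univ v, hv.2, hvS⟩)
      have hABpos : 0 < A.card + B.card := by
        have h1 := Finset.card_le_card hFsub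
        have h2 := Finset.card_union_le A B
        omega
      rcases le_or_gt B.card A.card with hc | hc
      · -- decrease on S side
        have hAne : A.Nonempty := by
          rw [← Finset.card_pos]; omega
        obtain ⟨p', hp1, hp2, hp3, hp4, hp5⟩ :=
          shift_step G w hw S p hpos hcon hc hAne
        obtain ⟨q, hq1, hq2, hq3, hq4, hq5⟩ := ih p' (by omega) hp1 hp2
        refine ⟨q, hq1, hq2, hq3, le_trans hq4 hp3, fun v hv => ?_⟩
        rw [hq5 v (by rw [hp4 v hv]; exact hv), hp4 v hv]
      · -- decrease on Sᶜ side
        have hconC : ∀ u v, u ∈ Sᶜ → v ∉ Sᶜ → G.Adj u v → w s(u,v) ≤ p u + p v := by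
          intro u v hu hv hadj
          have hv' : v ∈ S := Set.notMem_compl_iff.1 hv
          have := hcon v u hv' hu hadj.symm
          rw [Sym2.eq_swap]
          linarith
        have eA : (univ.filter fun v : α => Int.fract (p v) ≠ 0 ∧ v ∈ Sᶜ) = B := by
          apply Finset.filter_congr
          intro x _
          simp [Set.mem_compl_iff]
        have eB : (univ.filter fun v : α => Int.fract (p v) ≠ 0 ∧ v ∉ Sᶜ) = A := by
          apply Finset.filter_congr
          intro x _
          simp [Set.mem_compl_iff]
        have hcardC : (univ.filter fun v : α => Int.fract (p v) ≠ 0 ∧ v ∉ Sᶜ).card ≤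
            (univ.filter fun v : α => Int.fract (p v) ≠ 0 ∧ v ∈ Sᶜ).card := by
          rw [eA, eB]; omega
        have hBne : (univ.filter fun v : α => Int.fract (p v) ≠ 0 ∧ v ∈ Sᶜ).Nonempty := by
          rw [eA, ← Finset.card_pos]; omega
        obtain ⟨p', hp1, hp2, hp3, hp4, hp5⟩ :=
          shift_step G w hw Sᶜ p hpos hconC
            (by convert hcardC using 2 <;> congr!)
            (by convert hBne using 2 <;> congr!)
        obtain ⟨q, hq1, hq2, hq3, hq4, hq5⟩ := ih p' (by omega) hp1 (by
          intro u v hu hv hadj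
          have hu' : u ∉ Sᶜ := Set.notMem_compl_iff.2 hu
          have hv' : v ∈ Sᶜ := Set.mem_compl hv
          have := hp2 v u hv' hu' hadj.symm
          rw [Sym2.eq_swap]
          linarith)
        refine ⟨q, hq1, hq2, hq3, le_trans hq4 hp3, fun v hv => ?_⟩
        rw [hq5 v (by rw [hp4 v hv]; exact hv), hp4 v hv]

/-- if all edge weights are non-negative integers, MSPEC has an optimal
solution in which every power is a non-negative integer. -/
theorem integral_weights_integral_opt [Fintype α]
    (G : SimpleGraph α) (w : Sym2 α → ℝ) (s t : α)
    (hw : ∀ e, ∃ z : ℕ, w e = z)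
    (OPT : ℝ)
    (hOPT : IsLeast {c : ℝ | ∃ p, Feasible G w s t p ∧ ∑ v, p v = c} OPT) :
    ∃ p, Feasible G w s t p ∧ ∑ v, p v = OPT ∧ ∀ v, ∃ z : ℕ, p v = z := by
  obtain ⟨⟨p₀, hfeas, hsum⟩, hlb⟩ := hOPT
  obtain ⟨hs0, ht0, hp0, hreach⟩ := hfeas
  set S : Set α := {v | (cutGraph G w p₀).Reachable s v} with hSdef
  have hsS : s ∈ S := SimpleGraph.Reachable.refl s
  have htS : t ∉ S := hreach
  have hcon : ∀ u v, u ∈ S → v ∉ S → G.Adj u v → w s(u,v) ≤ p₀ u + p₀ v := by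
    intro u v hu hv hadj
    by_contra h
    push_neg at h
    exact hv (hu.trans (SimpleGraph.Adj.reachable (⟨hadj, h⟩ : (cutGraph G w p₀).Adj u v)))
  obtain ⟨q, hqpos, hqint, hqcon, hqsum, hqpres⟩ :=
    round_all G w hw S (univ.filter fun v => Int.fract (p₀ v) ≠ 0).card p₀ le_rfl hp0 hcon
  have hqs : q s = 0 := by
    rw [hqpres s (by rw [hs0]; exact Int.fract_zero), hs0]
  have hqt : q t = 0 := by
    rw [hqpres t (by rw [ht0]; exact Int.fract_zero), ht0]
  have key : ∀ u v, u ∈ S → (cutGraph G w q).Adj u v → v ∈ S := by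
    intro u v hu hadj
    by_contra hv
    exact absurd hadj.2 (not_lt.2 (hqcon u v hu hv hadj.1))
  have walkS : ∀ u v (_ : (cutGraph G w q).Walk u v), u ∈ S → v ∈ S := by
    intro u v W
    induction W with
    | nil => exact id
    | cons h _ ih => exact fun hu => ih (key _ _ hu h)
  have hreach' : ¬ (cutGraph G w q).Reachable s t := by
    intro h
    exact htS (h.elim fun W => walkS s t W hsS)
  have hfeasq : Feasible G w s t q := ⟨hqs, hqt, hqpos, hreach'⟩
  have h1 : ∑ v, q v ≤ OPT := by rw [← hsum]; exact hqsum
  have h2 : OPT ≤ ∑ v, q v := hlb ⟨q, hfeasq, rfl⟩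
  refine ⟨q, hfeasq, le_antisymm h1 h2, fun v => ?_⟩
  have hz : q v = ((⌊q v⌋ : ℤ) : ℝ) := by
    have := Int.floor_add_fract (q v)
    rw [hqint v] at this
    linarith
  have h3 : (0:ℤ) ≤ ⌊q v⌋ := Int.floor_nonneg.mpr (hqpos v)
  refine ⟨(⌊q v⌋).toNat, ?_⟩
  have h4 : (((⌊q v⌋).toNat : ℕ) : ℝ) = ((⌊q v⌋ : ℤ) : ℝ) := by
    rw [show (((⌊q v⌋).toNat : ℕ) : ℝ) = (((⌊q v⌋).toNat : ℤ) : ℝ) by push_cast; ring,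
      Int.toNat_of_nonneg h3]
  rw [h4]
  exact hz
end

section
/- The LP relaxation of the natural path-covering ILP for MSPEC has integrality gap at least 2: there is a graph instance whose optimal integral value is 1 but whose LP relaxation admits a feasible solution of value 1/2. -/
open Finset

variable {α : Type*}

/-- Feasibility for the LP relaxation of the natural path-covering ILP for MSPEC. -/
def LPFeas [Fintype α] [DecidableEq α] (G : SimpleGraph α) (w : Sym2 α → ℝ)
    (s t : α) (p : α → ℝ) (x : Sym2 α → ℝ) : Prop :=
  p s = 0 ∧ p t = 0 ∧ (∀ v, 0 ≤ p v) ∧ (∀ e, 0 ≤ x e ∧ x e ≤ 1) ∧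
  (∀ u v, G.Adj u v → w s(u, v) * x s(u, v) ≤ p u + p v) ∧
  (∀ π : G.Walk s t, π.IsPath → 1 ≤ ∑ e ∈ π.edges.toFinset, x e)

/-- Feasibility for the ILP: additionally every `x` value is `0` or `1`. -/
def ILPFeas [Fintype α] [DecidableEq α] (G : SimpleGraph α) (w : Sym2 α → ℝ)
    (s t : α) (p : α → ℝ) (x : Sym2 α → ℝ) : Prop :=
  LPFeas G w s t p x ∧ ∀ e, x e = 0 ∨ x e = 1


def G3 : SimpleGraph (Fin 3) where
  Adj u v := (u = 0 ∧ v = 1) ∨ (u = 1 ∧ v = 0) ∨ (u = 1 ∧ v = 2) ∨ (u = 2 ∧ v = 1)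
  symm := by constructor; intro u v h; tauto
  loopless := by
    constructor
    intro u h
    rcases h with ⟨h1, h2⟩ | ⟨h1, h2⟩ | ⟨h1, h2⟩ | ⟨h1, h2⟩ <;> subst h1 <;>
      exact absurd h2 (by decide)

instance : DecidableRel G3.Adj := fun u v => by
  unfold G3; dsimp; infer_instance

lemma first_step {b : Fin 3} (h : G3.Adj 0 b) : b = 1 := by
  rcases h with ⟨h1, h2⟩ | ⟨h1, h2⟩ | ⟨h1, h2⟩ | ⟨h1, h2⟩ <;>
    first | exact h2 | exact absurd h1 (by decide)

lemma two_le_length (π : G3.Walk (0 : Fin 3) 2) : 2 ≤ π.length := by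
  cases π with
  | cons h q =>
    cases q with
    | nil => exact absurd (first_step h) (by decide)
    | cons h2 q2 => simp [SimpleGraph.Walk.length_cons]

lemma two_le_card (π : G3.Walk (0 : Fin 3) 2) (hp : π.IsPath) :
    2 ≤ π.edges.toFinset.card := by
  rw [List.toFinset_card_of_nodup hp.edges_nodup, SimpleGraph.Walk.length_edges]
  exact two_le_length π

/-- the LP relaxation of the path-covering ILP for MSPEC has
integrality gap at least 2: there is an instance with optimal integral value `1`
admitting a fractional solution of value `1/2`. -/
theorem integrality_gap_two :
    ∃ (G : SimpleGraph (Fin 3)) (w : Sym2 (Fin 3) → ℝ) (s t : Fin 3),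
      IsLeast {c : ℝ | ∃ p x, ILPFeas G w s t p x ∧ ∑ v, p v = c} 1 ∧
      ∃ p x, LPFeas G w s t p x ∧ ∑ v, p v = 1 / 2 := by
  refine ⟨G3, fun _ => 1, 0, 2, ⟨?_, ?_⟩, ?_⟩
  · -- membership: integral solution of value 1
    refine ⟨fun v => if v = 1 then 1 else 0, fun _ => 1,
      ⟨⟨by norm_num, by norm_num [show (2:Fin 3) ≠ 1 from by decide], ?_, fun e => by norm_num, ?_, ?_⟩,
        fun e => Or.inr rfl⟩, ?_⟩
    · intro v; dsimp only; split <;> norm_num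
    · intro u v h
      rcases h with ⟨h1, h2⟩ | ⟨h1, h2⟩ | ⟨h1, h2⟩ | ⟨h1, h2⟩ <;> subst h1 <;> subst h2 <;>
        norm_num [show (2:Fin 3) ≠ 1 from by decide]
    · intro π hp
      have h2 := two_le_card π hp
      rw [Finset.sum_const, nsmul_eq_mul, mul_one]
      exact_mod_cast le_trans (by norm_num) h2
    · rw [Fin.sum_univ_three]; norm_num [show (2:Fin 3) ≠ 1 from by decide]
  · -- lower bound
    rintro c ⟨p, x, ⟨⟨hps, hpt, hpn, hx01, hedge, hpath⟩, hint⟩, hsum⟩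
    have h01 : G3.Adj 0 1 := Or.inl ⟨rfl, rfl⟩
    have h12 : G3.Adj 1 2 := Or.inr (Or.inr (Or.inl ⟨rfl, rfl⟩))
    set W : G3.Walk (0 : Fin 3) 2 := .cons h01 (.cons h12 .nil) with hW
    have hpW : W.IsPath := by
      rw [SimpleGraph.Walk.isPath_def]
      simp [hW, SimpleGraph.Walk.support_cons]
    have hkey := hpath W hpW
    have hedges : W.edges.toFinset = {s((0:Fin 3), (1:Fin 3)), s((1:Fin 3), (2:Fin 3))} := by
      simp [hW, SimpleGraph.Walk.edges_cons]
    rw [hedges, Finset.sum_pair (by decide)] at hkey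
    have e1 : (1:ℝ) * x s((0:Fin 3), (1:Fin 3)) ≤ p 0 + p 1 := hedge 0 1 h01
    have e2 : (1:ℝ) * x s((1:Fin 3), (2:Fin 3)) ≤ p 1 + p 2 := hedge 1 2 h12
    rw [hps, one_mul] at e1
    rw [hpt, one_mul] at e2
    have hx2 := (hx01 s((1:Fin 3), (2:Fin 3))).2
    have hp1 : 1 ≤ p 1 := by
      rcases hint s((0:Fin 3), (1:Fin 3)) with h | h <;> rw [h] at hkey e1 <;> linarith
    rw [Fin.sum_univ_three] at hsum
    have := hpn 0
    have := hpn 2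
    linarith
  · -- fractional solution of value 1/2
    refine ⟨fun v => if v = 1 then 1/2 else 0, fun _ => 1/2,
      ⟨by norm_num, by norm_num [show (2:Fin 3) ≠ 1 from by decide], ?_, fun e => by norm_num, ?_, ?_⟩, ?_⟩
    · intro v; dsimp only; split <;> norm_num
    · intro u v h
      rcases h with ⟨h1, h2⟩ | ⟨h1, h2⟩ | ⟨h1, h2⟩ | ⟨h1, h2⟩ <;> subst h1 <;> subst h2 <;>
        norm_num [show (2:Fin 3) ≠ 1 from by decide]
    · intro π hp
      have h2 := two_le_card π hp
      have h2' : (2 : ℝ) ≤ π.edges.toFinset.card := by exact_mod_cast h2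
      rw [Finset.sum_const, nsmul_eq_mul]
      linarith
    · rw [Fin.sum_univ_three]; norm_num [show (2:Fin 3) ≠ 1 from by decide]
end
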